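/- arXiv:0904.3153 — 6 statements merged into one kernel-verified Lean document; each statement's English description precedes it below -/
import Mathlib

section
/- In the free associative ring \mathbb{Z}\langle x, y \rangle, for every l \geq 1 the symmetric standard polynomial s_l evaluated at the elements r_i = x y^{i+1}, i = 1,...,l, is nonzero: s_l(xy^2, xy^3, ..., xy^{l+1}) \neq 0. -/
/-- The standard (symmetric alternating) polynomial
`s_m(x_1,…,x_m) = ∑_{σ ∈ S_m} sgn σ · x_{σ(1)} ⋯ x_{σ(m)}`. -/
def stdPoly {R : Type*} [Ring R] (m : ℕ) (x : Fin m → R) : R :=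
  ∑ σ : Equiv.Perm (Fin m), (Equiv.Perm.sign σ : ℤ) • (List.ofFn (fun i => x (σ i))).prod

private def blocks : List ℕ → List Bool
  | [] => []
  | k :: ks => true :: (List.replicate k false ++ blocks ks)

private lemma blocks_ne_false_cons (a : List ℕ) (t : List Bool) : blocks a ≠ false :: t := by
  cases a <;> simp [blocks]

private lemma blocks_aux {k k' : ℕ} (h : k < k') (ks ks' : List ℕ) :
    List.replicate k false ++ blocks ks ≠ List.replicate k' false ++ blocks ks' := by
  intro he
  have hk' : k' = k + (k' - k) := by omega
  rw [hk', List.replicate_add, List.append_assoc] at he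
  have h2 := List.append_cancel_left he
  have hpos : 0 < k' - k := by omega
  obtain ⟨m, hm⟩ : ∃ m, k' - k = m + 1 := ⟨k' - k - 1, by omega⟩
  rw [hm, List.replicate_succ] at h2
  exact blocks_ne_false_cons ks _ h2

private lemma blocks_injective : Function.Injective blocks := by
  intro a b h
  induction a generalizing b with
  | nil => cases b with
    | nil => rfl
    | cons k ks => simp [blocks] at h
  | cons k ks ih =>
    cases b with
    | nil => simp [blocks] at h
    | cons k' ks' =>
      simp only [blocks, List.cons.injEq, true_and] at h
      have hk : k = k' := by
        rcases lt_trichotomy k k' with hlt | he | hgt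
        · exact absurd h (blocks_aux hlt ks ks')
        · exact he
        · exact absurd h.symm (blocks_aux hgt ks' ks)
      subst hk
      rw [ih (List.append_cancel_left h)]

private lemma toList_pow_false (k : ℕ) :
    FreeMonoid.toList ((FreeMonoid.of false) ^ k) = List.replicate k false := by
  induction k with
  | zero => rfl
  | succ n ih =>
    rw [pow_succ', FreeMonoid.toList_mul, ih, FreeMonoid.toList_of, List.replicate_succ]
    rfl

private lemma toList_prod_blocks (ks : List ℕ) :
    FreeMonoid.toList ((ks.map (fun k => FreeMonoid.of true * FreeMonoid.of false ^ k)).prod)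
      = blocks ks := by
  induction ks with
  | nil => rfl
  | cons k ks ih =>
    rw [List.map_cons, List.prod_cons, FreeMonoid.toList_mul, ih, FreeMonoid.toList_mul,
      FreeMonoid.toList_of, toList_pow_false, blocks]
    rfl

private lemma of_pow (b : Bool) (k : ℕ) :
    (FreeAbelianGroup.of (FreeMonoid.of b)) ^ k
      = FreeAbelianGroup.of ((FreeMonoid.of b) ^ k : FreeMonoid Bool) := by
  induction k with
  | zero => rw [pow_zero, pow_zero, FreeAbelianGroup.of_one]
  | succ n ih => rw [pow_succ, pow_succ, ih, FreeAbelianGroup.of_mul_of]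

private lemma prod_map_of (L : List (FreeMonoid Bool)) :
    (L.map (FreeAbelianGroup.of : FreeMonoid Bool → FreeRing Bool)).prod
      = FreeAbelianGroup.of L.prod := by
  induction L with
  | nil => exact (FreeAbelianGroup.of_one _).symm
  | cons a L ih =>
    rw [List.map_cons, List.prod_cons, ih, List.prod_cons, FreeAbelianGroup.of_mul_of]

/-- In the free associative ring `ℤ⟨x,y⟩` (here `FreeRing Bool` with generators
`X = of true` and `Y = of false`), for every `l ≥ 1` the standard polynomial `s_l`
evaluated at `r_i = x·y^{i+1}` (`i = 1,…,l`) is nonzero. -/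
theorem stdPoly_ne_zero_freeRing (l : ℕ) (hl : 1 ≤ l) :
    stdPoly l (fun i : Fin l =>
        (FreeRing.of true) * (FreeRing.of false : FreeRing Bool) ^ ((i : ℕ) + 2)) ≠ 0 := by
  -- word associated to a permutation
  set W : Equiv.Perm (Fin l) → FreeMonoid Bool := fun σ =>
    (List.ofFn (fun i => FreeMonoid.of true * FreeMonoid.of false ^ ((σ i : ℕ) + 2))).prod with hW
  have hWinj : Function.Injective W := by
    intro σ τ h
    have h1 : blocks (List.ofFn (fun i => (σ i : ℕ) + 2))
        = blocks (List.ofFn (fun i => (τ i : ℕ) + 2)) := by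
      have e1 := toList_prod_blocks (List.ofFn (fun i => (σ i : ℕ) + 2))
      have e2 := toList_prod_blocks (List.ofFn (fun i => (τ i : ℕ) + 2))
      rw [List.map_ofFn] at e1 e2
      rw [← e1, ← e2]
      exact congrArg FreeMonoid.toList h
    have h2 := blocks_injective h1
    rw [List.ofFn_inj] at h2
    ext i
    have := congrFun h2 i
    omega
  have hProd : ∀ σ : Equiv.Perm (Fin l),
      (List.ofFn (fun i => (FreeRing.of true) *
        (FreeRing.of false : FreeRing Bool) ^ ((σ i : ℕ) + 2))).prod
        = FreeAbelianGroup.of (W σ) := by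
    intro σ
    have : (fun i : Fin l => (FreeRing.of true) *
        (FreeRing.of false : FreeRing Bool) ^ ((σ i : ℕ) + 2))
        = fun i => FreeAbelianGroup.of
            (FreeMonoid.of true * FreeMonoid.of false ^ ((σ i : ℕ) + 2)) := by
      funext i
      show FreeAbelianGroup.of (FreeMonoid.of true) *
          (FreeAbelianGroup.of (FreeMonoid.of false)) ^ ((σ i : ℕ) + 2) = _
      rw [of_pow, FreeAbelianGroup.of_mul_of]
    rw [this, hW]
    have := prod_map_of (List.ofFn (fun i => FreeMonoid.of true * FreeMonoid.of false ^ ((σ i : ℕ) + 2)))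
    rw [List.map_ofFn] at this
    exact this
  intro hzero
  classical
  set φ : FreeRing Bool →+ ℤ :=
    FreeAbelianGroup.lift (fun w => if w = W 1 then (1 : ℤ) else 0) with hφ
  have hφ0 : φ (stdPoly l (fun i : Fin l =>
      (FreeRing.of true) * (FreeRing.of false : FreeRing Bool) ^ ((i : ℕ) + 2))) = 1 := by
    unfold stdPoly
    rw [map_sum]
    have : ∀ σ : Equiv.Perm (Fin l),
        φ ((Equiv.Perm.sign σ : ℤ) • (List.ofFn (fun i =>
          (FreeRing.of true) * (FreeRing.of false : FreeRing Bool) ^ (((σ i) : ℕ) + 2))).prod)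
        = (Equiv.Perm.sign σ : ℤ) * (if W σ = W 1 then (1 : ℤ) else 0) := by
      intro σ
      rw [map_zsmul, hProd σ, hφ, smul_eq_mul]
      erw [FreeAbelianGroup.lift_apply_of]
    rw [Finset.sum_congr rfl (fun σ _ => this σ)]
    rw [Finset.sum_eq_single (1 : Equiv.Perm (Fin l))]
    · simp
    · intro σ _ hσ
      rw [if_neg (fun h => hσ (hWinj h)), mul_zero]
    · simp
  rw [hzero, map_zero] at hφ0
  exact one_ne_zero hφ0.symm
end

section
/- Let K be a field of characteristic 2 and define on V = K \times K the operations (a,b) + (c,d) = (a+c, ac+b+d) and (a,b) \times (c,d) = (ac, bc^2 + a^2 d). Then (V, +, \times) is a commutative associative ring with additive identity (0,0) and multiplicative identity (1,0). -/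
/-- Twisted addition on `K × K`: `(a,b) + (c,d) = (a+c, ac+b+d)`. -/
def Vadd {K : Type*} [Field K] (v w : K × K) : K × K :=
  (v.1 + w.1, v.1 * w.1 + v.2 + w.2)

/-- Twisted multiplication on `K × K`: `(a,b) × (c,d) = (ac, bc² + a²d)`. -/
def Vmul {K : Type*} [Field K] (v w : K × K) : K × K :=
  (v.1 * w.1, v.2 * w.1 ^ 2 + v.1 ^ 2 * w.2)

/-- For `K` a field of characteristic 2, `(K × K, Vadd, Vmul)` is a commutative
associative ring with additive identity `(0,0)` and multiplicative identity `(1,0)`. -/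
theorem twisted_ring_axioms {K : Type*} [Field K] (hK : ringChar K = 2) :
    (∀ u v w : K × K, Vadd (Vadd u v) w = Vadd u (Vadd v w)) ∧
    (∀ u v : K × K, Vadd u v = Vadd v u) ∧
    (∀ v : K × K, Vadd ((0 : K), (0 : K)) v = v) ∧
    (∀ v : K × K, ∃ w : K × K, Vadd v w = ((0 : K), (0 : K))) ∧
    (∀ u v w : K × K, Vmul (Vmul u v) w = Vmul u (Vmul v w)) ∧
    (∀ u v : K × K, Vmul u v = Vmul v u) ∧
    (∀ v : K × K, Vmul ((1 : K), (0 : K)) v = v) ∧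
    (∀ u v w : K × K, Vmul u (Vadd v w) = Vadd (Vmul u v) (Vmul u w)) ∧
    (∀ u v w : K × K, Vmul (Vadd u v) w = Vadd (Vmul u w) (Vmul v w)) := by
  have h2 : (2 : K) = 0 := by
    haveI : CharP K 2 := hK ▸ ringChar.charP K
    exact_mod_cast CharP.cast_eq_zero K 2
  refine ⟨fun u v w => ?_, fun u v => ?_, fun v => ?_, fun v => ?_, fun u v w => ?_,
    fun u v => ?_, fun v => ?_, fun u v w => ?_, fun u v w => ?_⟩
  · simp only [Vadd, Prod.mk.injEq]; constructor <;> ring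
  · simp only [Vadd, Prod.mk.injEq]; constructor <;> ring
  · simp only [Vadd]; simp
  · exact ⟨(-v.1, v.1 * v.1 - v.2), by simp only [Vadd, Prod.mk.injEq]; constructor <;> ring⟩
  · simp only [Vmul, Prod.mk.injEq]; constructor <;> ring
  · simp only [Vmul, Prod.mk.injEq]; constructor <;> ring
  · simp only [Vmul]; simp
  · simp only [Vmul, Vadd, Prod.mk.injEq]
    exact ⟨by ring, by linear_combination u.2 * v.1 * w.1 * h2⟩
  · simp only [Vmul, Vadd, Prod.mk.injEq]
    exact ⟨by ring, by linear_combination u.1 * v.1 * w.2 * h2⟩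
end

section
/- In the ring V = K \times K over a field K of characteristic 2 with operations (a,b)+(c,d) = (a+c, ac+b+d) and (a,b)\times(c,d) = (ac, bc^2 + a^2 d), the set I = \{(0,b) : b \in K\} is an ideal with I \cdot I = 0, and the quotient V/I is isomorphic as a ring to K. -/
/-- In the twisted ring `V = K × K` over a field of characteristic 2, the set
`I = {(0,b) : b ∈ K}` is an ideal with `I · I = 0`, and `V/I ≅ K` as rings:
the first projection is a surjective ring homomorphism (for the twisted operations)
whose kernel is exactly `I`. -/
theorem twisted_ring_ideal {K : Type*} [Field K] (hK : ringChar K = 2) :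
    -- `I` is closed under addition and negation, and absorbs multiplication:
    (∀ v w : K × K, v.1 = 0 → w.1 = 0 → (Vadd v w).1 = 0) ∧
    (∀ v : K × K, v.1 = 0 → ∃ w : K × K, w.1 = 0 ∧ Vadd v w = ((0 : K), (0 : K))) ∧
    (∀ v w : K × K, v.1 = 0 → (Vmul w v).1 = 0 ∧ (Vmul v w).1 = 0) ∧
    -- `I · I = 0`:
    (∀ v w : K × K, v.1 = 0 → w.1 = 0 → Vmul v w = ((0 : K), (0 : K))) ∧
    -- the quotient `V/I` is isomorphic to `K`, via the first projection:
    (∀ v w : K × K, (Vadd v w).1 = v.1 + w.1) ∧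
    (∀ v w : K × K, (Vmul v w).1 = v.1 * w.1) ∧
    ((((1 : K), (0 : K)) : K × K).1 = 1) ∧
    (Function.Surjective (fun v : K × K => v.1)) ∧
    (∀ v : K × K, v.1 = 0 ↔ ∃ b : K, v = ((0 : K), b)) := by
  refine ⟨fun v w hv hw => by simp [Vadd, hv, hw],
    fun v hv => ⟨(0, -v.2), rfl, by simp [Vadd, hv, Prod.ext_iff]⟩,
    fun v w hv => ⟨by simp [Vmul, hv], by simp [Vmul, hv]⟩,
    fun v w hv hw => by simp [Vmul, hv, hw, Prod.ext_iff],
    fun v w => rfl, fun v w => rfl, rfl,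
    fun a => ⟨(a, 0), rfl⟩,
    fun v => ⟨fun hv => ⟨v.2, Prod.ext hv rfl⟩, fun ⟨b, hb⟩ => by simp [hb]⟩⟩
end

section
/- In the ring V = K \times K over a field K of characteristic 2 with twisted addition (a,b)+(c,d)=(a+c, ac+b+d), every element (a,b) with a \neq 0 has additive order 4; in particular the additive group of V has exponent 4 and V does not admit a structure of an algebra over any field. -/
/-- `n`-fold iterated twisted sum `n • v = v + v + ⋯ + v`. -/
def Vsmul {K : Type*} [Field K] : ℕ → K × K → K × K
  | 0, _ => ((0 : K), (0 : K))
  | n + 1, v => Vadd v (Vsmul n v)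

section Aux
variable {K : Type*} [Field K] (hK : ringChar K = 2)

lemma h2' (hK : ringChar K = 2) : (2 : K) = 0 := by
  have := ringChar.Nat.cast_ringChar (R := K)
  rw [hK] at this; exact_mod_cast this

lemma smul4 (hK : ringChar K = 2) (v : K × K) :
    Vsmul 4 v = ((0 : K), (0 : K)) := by
  have h2 := h2' hK
  obtain ⟨a, b⟩ := v
  simp only [Vsmul, Vadd, Prod.mk.injEq]
  constructor
  · linear_combination 2 * a * h2
  · linear_combination (3 * a ^ 2 + 2 * b) * h2

lemma smul_add4 (hK : ringChar K = 2) (n : ℕ) (v : K × K) :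
    Vsmul (n + 4) v = Vsmul n v := by
  have h2 := h2' hK
  obtain ⟨a, b⟩ := v
  show Vadd _ (Vadd _ (Vadd _ (Vadd _ (Vsmul n (a, b))))) = Vsmul n (a, b)
  obtain ⟨c, d⟩ := Vsmul n ((a, b) : K × K)
  simp only [Vadd, Prod.mk.injEq]
  constructor
  · linear_combination 2 * a * h2
  · linear_combination (3 * a ^ 2 + 2 * b + 2 * a * c) * h2

lemma smul_mod4 (hK : ringChar K = 2) (n : ℕ) (v : K × K) :
    Vsmul n v = Vsmul (n % 4) v := by
  induction n using Nat.strong_induction_on with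
  | _ n ih =>
    rcases lt_or_ge n 4 with h | h
    · rw [Nat.mod_eq_of_lt h]
    · obtain ⟨m, rfl⟩ : ∃ m, n = m + 4 := ⟨n - 4, by omega⟩
      rw [smul_add4 hK, ih m (by omega), Nat.add_mod_right]
end Aux


/-- In the twisted abelian group `V = K × K` over a field of characteristic 2, every
element `(a,b)` with `a ≠ 0` has additive order `4`; in particular the additive group
of `V` has exponent `4`, and `V` is not a vector space over any field: its additive
group is nontrivial torsion but has no prime exponent. -/
theorem twisted_ring_order_four {K : Type*} [Field K] (hK : ringChar K = 2) :
    (∀ a b : K, a ≠ 0 →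
      Vsmul 4 ((a, b) : K × K) = ((0 : K), (0 : K)) ∧
      (∀ m : ℕ, 0 < m → m < 4 → Vsmul m ((a, b) : K × K) ≠ ((0 : K), (0 : K)))) ∧
    (∀ v : K × K, Vsmul 4 v = ((0 : K), (0 : K))) ∧
    ¬ (∃ q : ℕ, q.Prime ∧ ∀ v : K × K, Vsmul q v = ((0 : K), (0 : K))) := by
  have h2 := h2' hK
  refine ⟨fun a b ha => ⟨smul4 hK _, fun m hm hm4 => ?_⟩, fun v => smul4 hK v, ?_⟩
  · interval_cases m <;> intro hh <;> simp only [Vsmul, Vadd, Prod.mk.injEq] at hh <;> obtain ⟨h1, hb⟩ := hh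
    · exact ha (by linear_combination h1)
    · exact ha (mul_self_eq_zero.mp (by linear_combination hb - b * h2))
    · exact ha (by linear_combination h1 - a * h2)
  · rintro ⟨q, hq, hall⟩
    rcases eq_or_ne q 2 with rfl | hne
    · have := hall ((1, 0) : K × K)
      simp only [Vsmul, Vadd, Prod.mk.injEq] at this
      exact one_ne_zero (α := K) (by linear_combination this.2)
    · have hodd : q % 2 = 1 := Nat.odd_iff.mp (hq.odd_of_ne_two hne)
      have hm : q % 4 % 2 = 1 := by
        rw [Nat.mod_mod_of_dvd q (by norm_num : 2 ∣ 4)]; exact hodd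
      have hlt : q % 4 < 4 := Nat.mod_lt _ (by norm_num)
      have this := hall ((1, 0) : K × K)
      rw [smul_mod4 hK] at this
      have h14 : q % 4 = 1 ∨ q % 4 = 3 := by omega
      rcases h14 with h | h <;> rw [h] at this <;>
        simp only [Vsmul, Vadd, Prod.mk.injEq] at this
      · exact one_ne_zero (α := K) (by linear_combination this.1)
      · exact one_ne_zero (α := K) (by linear_combination this.1 - h2)
end

section
/- Let K be an infinite field of characteristic 2 and V = K \times K the ring with operations (a,b)+(c,d)=(a+c, ac+b+d) and (a,b)\times(c,d)=(ac, bc^2+a^2d). Then V has no proper ideal of finite index: every ideal J of V with finite quotient V/J satisfies J = V. -/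
/-- Let `K` be an infinite field of characteristic 2 and `V = K × K` the twisted ring.
Then `V` has no proper ideal of finite index: if `J ⊆ V` is closed under the twisted
addition and negation, absorbs the twisted multiplication, and has only finitely many
additive cosets, then `J = V`. -/
theorem twisted_ring_no_finite_index_ideal {K : Type*} [Field K] (hK : ringChar K = 2)
    (hInf : Infinite K) (J : Set (K × K))
    (hzero : ((0 : K), (0 : K)) ∈ J)
    (haddJ : ∀ v ∈ J, ∀ w ∈ J, Vadd v w ∈ J)
    (hnegJ : ∀ v ∈ J, ∃ w ∈ J, Vadd v w = ((0 : K), (0 : K)))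
    (hmulJ : ∀ v ∈ J, ∀ w : K × K, Vmul v w ∈ J ∧ Vmul w v ∈ J)
    (hfin : ∃ S : Finset (K × K), ∀ v : K × K, ∃ u ∈ S, ∃ j ∈ J, v = Vadd u j) :
    J = Set.univ := by
  classical
  obtain ⟨S, hS⟩ := hfin
  -- Step 1: find an element of J with nonzero first coordinate
  have key : ∃ z ∈ J, z.1 ≠ (0 : K) := by
    have hchoice : ∀ x : K, ∃ u : {u // u ∈ S}, ∃ j ∈ J,
        ((x, (0 : K)) : K × K) = Vadd u.1 j := by
      intro x
      obtain ⟨u, hu, j, hj, he⟩ := hS (x, 0)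
      exact ⟨⟨u, hu⟩, j, hj, he⟩
    choose f j hjJ hje using hchoice
    obtain ⟨x, y, hxy, hf⟩ := Finite.exists_ne_map_eq_of_infinite f
    obtain ⟨w, hwJ, hw⟩ := hnegJ (j y) (hjJ y)
    refine ⟨Vadd (j x) w, haddJ _ (hjJ x) _ hwJ, ?_⟩
    have h1 : x = (f x).1.1 + (j x).1 := congrArg Prod.fst (hje x)
    have h2 : y = (f y).1.1 + (j y).1 := congrArg Prod.fst (hje y)
    have h3 : (j y).1 + w.1 = 0 := congrArg Prod.fst hw
    have hfe : (f x).1.1 = (f y).1.1 := by rw [hf]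
    have hfst : (Vadd (j x) w).1 = (j x).1 + w.1 := rfl
    rw [hfst]
    intro h
    apply hxy
    linear_combination h1 - h2 + hfe + h - h3
  obtain ⟨z, hzJ, hz⟩ := key
  -- Step 2: J absorbs multiplication, so it is everything
  apply Set.eq_univ_iff_forall.mpr
  intro v
  have := (hmulJ z hzJ (z.1⁻¹ * v.1, (z.1 ^ 2)⁻¹ * (v.2 - z.2 * (z.1⁻¹ * v.1) ^ 2))).1
  have hv : v = Vmul z (z.1⁻¹ * v.1, (z.1 ^ 2)⁻¹ * (v.2 - z.2 * (z.1⁻¹ * v.1) ^ 2)) := by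
    simp only [Vmul]
    refine Prod.ext ?_ ?_ <;> field_simp <;> ring
  rw [hv]
  exact this
end

section
/- There is no injective ring homomorphism from \mathbb{Z}\langle x, y \rangle into any finite-dimensional algebra over a field, nor into any ring possessing a finite-index ideal that is a finite-dimensional algebra over a field. -/
open Finset

variable {R : Type*}

def chainMul [Mul R] : ∀ n, (Fin (n+1) → R) → R
  | 0, v => v 0
  | n+1, v => v 0 * chainMul n (fun i => v i.succ)

theorem chainMul_map {R' : Type*} [Mul R] [Mul R'] (f : R → R')
    (hf : ∀ x y, f (x * y) = f x * f y) :
    ∀ (n) (v : Fin (n+1) → R), f (chainMul n v) = chainMul n (fun i => f (v i))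
  | 0, v => rfl
  | n+1, v => by
    rw [chainMul, chainMul, hf, chainMul_map f hf n]

theorem chainMul_update_add [NonUnitalNonAssocRing R] :
    ∀ (n) (v : Fin (n+1) → R) (i : Fin (n+1)) (x y : R),
      chainMul n (Function.update v i (x + y)) =
        chainMul n (Function.update v i x) + chainMul n (Function.update v i y)
  | 0, v, i, x, y => by
    rw [Fin.eq_zero i]
    simp [chainMul]
  | n+1, v, i, x, y => by
    induction i using Fin.cases with
    | zero =>
      have h : ∀ z : R, (fun j : Fin (n+1) => Function.update v 0 z j.succ) =
          fun j => v j.succ := by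
        intro z; funext j; rw [Function.update_of_ne (Fin.succ_ne_zero j)]
      simp only [chainMul, Function.update_self, h, add_mul]
    | succ i =>
      have h : ∀ z : R, (fun j : Fin (n+1) => Function.update v i.succ z j.succ) =
          Function.update (fun j => v j.succ) i z := by
        intro z; funext j
        rcases eq_or_ne j i with rfl | hj
        · simp
        · rw [Function.update_of_ne hj,
            Function.update_of_ne (fun h => hj (Fin.succ_injective _ h))]
      simp only [chainMul, Function.update_of_ne (Fin.succ_ne_zero i).symm, h,
        chainMul_update_add n _ i x y, mul_add]

theorem chainMul_update_smul {K : Type*} [Monoid K] [NonUnitalNonAssocRing R]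
    [DistribMulAction K R] [SMulCommClass K R R] [IsScalarTower K R R] :
    ∀ (n) (v : Fin (n+1) → R) (i : Fin (n+1)) (c : K) (x : R),
      chainMul n (Function.update v i (c • x)) =
        c • chainMul n (Function.update v i x)
  | 0, v, i, c, x => by
    rw [Fin.eq_zero i]
    simp [chainMul]
  | n+1, v, i, c, x => by
    induction i using Fin.cases with
    | zero =>
      have h : ∀ z : R, (fun j : Fin (n+1) => Function.update v 0 z j.succ) =
          fun j => v j.succ := by
        intro z; funext j; rw [Function.update_of_ne (Fin.succ_ne_zero j)]
      simp only [chainMul, Function.update_self, h, smul_mul_assoc]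
    | succ i =>
      have h : ∀ z : R, (fun j : Fin (n+1) => Function.update v i.succ z j.succ) =
          Function.update (fun j => v j.succ) i z := by
        intro z; funext j
        rcases eq_or_ne j i with rfl | hj
        · simp
        · rw [Function.update_of_ne hj,
            Function.update_of_ne (fun h => hj (Fin.succ_injective _ h))]
      simp only [chainMul, Function.update_of_ne (Fin.succ_ne_zero i).symm, h,
        chainMul_update_smul n _ i c x, mul_smul_comm]

/-- `chainMul` as a multilinear map. -/
def chainMulML (K : Type*) (R : Type*) [CommSemiring K] [NonUnitalNonAssocRing R]
    [Module K R] [SMulCommClass K R R] [IsScalarTower K R R] (n : ℕ) :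
    MultilinearMap K (fun _ : Fin (n+1) => R) R where
  toFun := chainMul n
  map_update_add' := fun {dec} v i x y => by
    rw [Subsingleton.elim dec (instDecidableEqFin (n+1))]
    exact chainMul_update_add n v i x y
  map_update_smul' := fun {dec} v i c x => by
    rw [Subsingleton.elim dec (instDecidableEqFin (n+1))]
    exact chainMul_update_smul n v i c x

def stdF [NonUnitalNonAssocRing R] (n : ℕ) (v : Fin (n+1) → R) : R :=
  ∑ σ : Equiv.Perm (Fin (n+1)), (Equiv.Perm.sign σ : ℤ) • chainMul n (v ∘ σ)

theorem stdF_eq_zero {K : Type*} [Field K] [NonUnitalRing R] [Module K R]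
    [SMulCommClass K R R] [IsScalarTower K R R] [FiniteDimensional K R]
    {n : ℕ} (hn : Module.finrank K R ≤ n) (v : Fin (n + 1) → R) : stdF n v = 0 := by
  have hdep : ¬ LinearIndependent K v := by
    intro h
    have := h.fintype_card_le_finrank
    simp only [Fintype.card_fin] at this
    omega
  have h0 := AlternatingMap.map_linearDependent ((chainMulML K R n).alternatization) v hdep
  rw [MultilinearMap.alternatization_apply] at h0
  rw [← h0, stdF]
  congr 1

theorem stdF_ringHom {R' : Type*} [Ring R] [Ring R'] (f : R →+* R') (n : ℕ)
    (v : Fin (n+1) → R) : f (stdF n v) = stdF n (fun i => f (v i)) := by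
  rw [stdF, map_sum, stdF]
  refine Finset.sum_congr rfl fun σ _ => ?_
  rw [map_zsmul, chainMul_map f (map_mul f)]
  rfl

theorem chainMul_zsmul [NonUnitalNonAssocRing R] :
    ∀ (n) (c : ℤ) (v : Fin (n+1) → R),
      chainMul n (fun i => c • v i) = c ^ (n+1) • chainMul n v
  | 0, c, v => by simp [chainMul]
  | n+1, c, v => by
    rw [chainMul, chainMul]
    show (c • v 0) * chainMul n (fun i => c • v i.succ) = _
    rw [chainMul_zsmul n c (fun i => v i.succ), smul_mul_assoc, mul_smul_comm,
      smul_smul, ← pow_succ']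

theorem stdF_zsmul [NonUnitalNonAssocRing R] (n : ℕ) (c : ℤ) (v : Fin (n+1) → R) :
    stdF n (fun i => c • v i) = c ^ (n+1) • stdF n v := by
  rw [stdF, stdF, Finset.smul_sum]
  refine Finset.sum_congr rfl fun σ _ => ?_
  rw [smul_comm]
  congr 1
  exact chainMul_zsmul n c (v ∘ σ)

def wcode (k : ℕ) : List Bool := List.replicate (k+1) false ++ [true]

theorem wcode_cancel : ∀ (a b : ℕ) (s t : List Bool),
    wcode a ++ s = wcode b ++ t → a = b ∧ s = t
  | 0, 0, s, t, h => by simpa [wcode] using h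
  | 0, _+1, s, t, h => by simp [wcode, List.replicate_succ] at h
  | _+1, 0, s, t, h => by simp [wcode, List.replicate_succ] at h
  | a+1, b+1, s, t, h => by
    have h' : wcode a ++ s = wcode b ++ t := by
      have : (false :: (wcode a ++ s) : List Bool) = false :: (wcode b ++ t) := by
        simpa [wcode, List.replicate_succ] using h
      exact List.cons_injective.eq_iff.mp this
    obtain ⟨hab, hst⟩ := wcode_cancel a b s t h'
    exact ⟨by omega, hst⟩

theorem wcode_ne_nil (k : ℕ) : wcode k ≠ [] := by simp [wcode]

theorem wcode_join : ∀ (l₁ l₂ : List ℕ),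
    (l₁.map wcode).flatten = (l₂.map wcode).flatten → l₁ = l₂
  | [], [], _ => rfl
  | [], b :: t, h => by
    exact absurd (by simpa using h.symm : _ ∧ _).1 (wcode_ne_nil b)
  | a :: s, [], h => by
    exact absurd (by simpa using h : _ ∧ _).1 (wcode_ne_nil a)
  | a :: s, b :: t, h => by
    simp only [List.map_cons, List.flatten_cons] at h
    obtain ⟨hab, hst⟩ := wcode_cancel a b _ _ h
    rw [hab, wcode_join s t hst]

open FreeMonoid in
def mword (k : ℕ) : FreeMonoid Bool := FreeMonoid.of false ^ (k+1) * FreeMonoid.of true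

theorem toList_of_pow (x : Bool) : ∀ n : ℕ,
    FreeMonoid.toList (FreeMonoid.of x ^ n) = List.replicate n x
  | 0 => rfl
  | n+1 => by
    rw [pow_succ', FreeMonoid.toList_mul, toList_of_pow x n, FreeMonoid.toList_of,
      List.replicate_succ]
    rfl

theorem toList_mword (k : ℕ) : FreeMonoid.toList (mword k) = wcode k := by
  rw [mword, FreeMonoid.toList_mul, toList_of_pow, FreeMonoid.toList_of, wcode]

theorem toList_chainMul : ∀ (n) (v : Fin (n+1) → FreeMonoid Bool),
    FreeMonoid.toList (chainMul n v) =
      (List.ofFn (fun i => FreeMonoid.toList (v i))).flatten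
  | 0, v => by simp [chainMul]
  | n+1, v => by
    rw [chainMul, FreeMonoid.toList_mul, toList_chainMul n]
    conv_rhs => rw [List.ofFn_succ, List.flatten_cons]

theorem chain_mword_inj {n : ℕ} {f g : Fin (n+1) → ℕ}
    (h : chainMul n (fun i => mword (f i)) = chainMul n (fun i => mword (g i))) :
    f = g := by
  have h2 := congrArg FreeMonoid.toList h
  rw [toList_chainMul, toList_chainMul] at h2
  simp only [toList_mword] at h2
  rw [show (fun i => wcode (f i)) = wcode ∘ f from rfl,
      show (fun i => wcode (g i)) = wcode ∘ g from rfl,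
      ← List.map_ofFn, ← List.map_ofFn] at h2
  have h3 := wcode_join _ _ h2
  exact List.ofFn_injective h3

noncomputable def psiMA : FreeRing Bool →+* MonoidAlgebra ℤ (FreeMonoid Bool) :=
  FreeRing.lift (fun b => MonoidAlgebra.single (FreeMonoid.of b) 1)

def wFR (k : ℕ) : FreeRing Bool := FreeRing.of false ^ (k+1) * FreeRing.of true

theorem psiMA_wFR (k : ℕ) : psiMA (wFR k) = MonoidAlgebra.single (mword k) 1 := by
  rw [wFR, map_mul, map_pow, psiMA, FreeRing.lift_of, FreeRing.lift_of,
    MonoidAlgebra.single_pow, one_pow, MonoidAlgebra.single_mul_single, one_mul, mword]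

theorem smul_stdF_wFR_ne_zero (n : ℕ) {c : ℤ} (hc : c ≠ 0) :
    c • stdF n (fun i : Fin (n+1) => wFR (i : ℕ)) ≠ 0 := by
  classical
  intro h0
  have h1 : psiMA (c • stdF n (fun i : Fin (n+1) => wFR (i : ℕ))) = 0 := by
    rw [h0, map_zero]
  rw [map_zsmul, stdF_ringHom] at h1
  simp only [psiMA_wFR] at h1
  have hchain : ∀ σ : Equiv.Perm (Fin (n+1)),
      chainMul n ((fun i : Fin (n+1) => MonoidAlgebra.single (mword (i:ℕ)) (1:ℤ)) ∘ ⇑σ) =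
        MonoidAlgebra.single (chainMul n (fun i => mword ((σ i : Fin (n+1)) : ℕ))) 1 := by
    intro σ
    have := chainMul_map (R := FreeMonoid Bool) (R' := MonoidAlgebra ℤ (FreeMonoid Bool))
      (fun m => MonoidAlgebra.single m (1:ℤ))
      (fun x y => by rw [MonoidAlgebra.single_mul_single, one_mul])
      n (fun i => mword ((σ i : Fin (n+1)) : ℕ))
    exact this.symm
  rw [stdF] at h1
  simp only [hchain] at h1
  set key := chainMul n (fun i : Fin (n+1) => mword (i : ℕ)) with hkey
  have h2 : (Finsupp.applyAddHom (M := ℤ) key)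
      (c • ∑ σ : Equiv.Perm (Fin (n+1)), (Equiv.Perm.sign σ : ℤ) •
        MonoidAlgebra.single (chainMul n (fun i => mword ((σ i : Fin (n+1)) : ℕ))) (1:ℤ)).coeff = 0 := by
    rw [h1]; rfl
  rw [MonoidAlgebra.coeff_smul, MonoidAlgebra.coeff_sum, map_zsmul, map_sum] at h2
  simp only [MonoidAlgebra.coeff_smul, map_zsmul, Finsupp.applyAddHom_apply] at h2
  have h3 : ∀ σ : Equiv.Perm (Fin (n+1)),
      (Equiv.Perm.sign σ : ℤ) • (MonoidAlgebra.single
        (chainMul n (fun i => mword ((σ i : Fin (n+1)) : ℕ))) (1:ℤ)).coeff key =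
      if σ = 1 then 1 else 0 := by
    intro σ
    rw [MonoidAlgebra.coeff_single, Finsupp.single_apply]
    rcases eq_or_ne σ 1 with rfl | hσ
    · simp [hkey]
    · rw [if_neg hσ, if_neg, smul_zero]
      intro hEq
      apply hσ
      have := chain_mword_inj (f := fun i => ((σ i : Fin (n+1)) : ℕ))
        (g := fun i : Fin (n+1) => (i : ℕ)) (by rw [hEq, hkey])
      exact Equiv.ext fun i => Fin.val_injective (congrFun this i)
  simp only [h3] at h2
  rw [Finset.sum_ite_eq' Finset.univ (1 : Equiv.Perm (Fin (n+1))) (fun _ => (1:ℤ))] at h2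
  simp at h2
  exact hc h2

section IdealTransport

variable {S A : Type*} [Ring S] [NonUnitalRing A]

theorem chainMul_mem_map (I : AddSubgroup S)
    (hI : ∀ x ∈ I, ∀ s : S, s * x ∈ I ∧ x * s ∈ I)
    (e : S → A) (hmul : ∀ x ∈ I, ∀ y ∈ I, e (x * y) = e x * e y) :
    ∀ (n) (v : Fin (n+1) → S), (∀ i, v i ∈ I) →
      chainMul n v ∈ I ∧ e (chainMul n v) = chainMul n (fun i => e (v i))
  | 0, v, hv => ⟨hv 0, rfl⟩
  | n+1, v, hv => by
    obtain ⟨hmem, heq⟩ :=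
      chainMul_mem_map I hI e hmul n (fun i => v i.succ) (fun i => hv _)
    refine ⟨(hI _ hmem (v 0)).1, ?_⟩
    rw [chainMul, hmul _ (hv 0) _ hmem, heq]
    rfl

theorem stdF_mem_map (I : AddSubgroup S)
    (hI : ∀ x ∈ I, ∀ s : S, s * x ∈ I ∧ x * s ∈ I)
    (e : S → A)
    (hadd : ∀ x ∈ I, ∀ y ∈ I, e (x + y) = e x + e y)
    (hmul : ∀ x ∈ I, ∀ y ∈ I, e (x * y) = e x * e y)
    (n : ℕ) (v : Fin (n+1) → S) (hv : ∀ i, v i ∈ I) :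
    stdF n v ∈ I ∧ e (stdF n v) = stdF n (fun i => e (v i)) := by
  classical
  let g : I →+ A := AddMonoidHom.mk' (fun x => e x) (fun a b => hadd a a.2 b b.2)
  set T : Equiv.Perm (Fin (n+1)) → S := fun σ => chainMul n (v ∘ σ) with hT_def
  have hT : ∀ σ, T σ ∈ I ∧ e (T σ) = chainMul n (fun i => e (v (σ i))) := fun σ =>
    chainMul_mem_map I hI e hmul n (v ∘ σ) (fun i => hv _)
  have hsum : stdF n v =
      I.subtype (∑ σ : Equiv.Perm (Fin (n+1)),
        (Equiv.Perm.sign σ : ℤ) • (⟨T σ, (hT σ).1⟩ : I)) := by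
    rw [map_sum]
    simp only [map_zsmul]
    rfl
  constructor
  · rw [hsum]
    exact (∑ σ : Equiv.Perm (Fin (n+1)),
      (Equiv.Perm.sign σ : ℤ) • (⟨T σ, (hT σ).1⟩ : I)).2
  · rw [hsum]
    show g (∑ σ : Equiv.Perm (Fin (n+1)),
      (Equiv.Perm.sign σ : ℤ) • (⟨T σ, (hT σ).1⟩ : I)) = _
    rw [map_sum, stdF]
    refine Finset.sum_congr rfl fun σ _ => ?_
    rw [map_zsmul]
    congr 1
    exact (hT σ).2

end IdealTransport


/-- There is no injective ring homomorphism from the free ring `ℤ⟨x,y⟩`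
(`FreeRing Bool`) into any finite-dimensional (unital) algebra over a field, nor into
any ring possessing a finite-index two-sided ideal which, as a nonunital ring, is
isomorphic to a finite-dimensional (not necessarily unital) algebra over a field. -/
theorem freeRing_not_virtually_linear :
    -- no embedding into a finite-dimensional algebra over a field:
    (∀ (K B : Type) [Field K] [Ring B] [Algebra K B] [FiniteDimensional K B],
      ¬ ∃ φ : FreeRing Bool →+* B, Function.Injective φ) ∧
    -- no embedding into a ring with a finite-index ideal that is a
    -- finite-dimensional algebra over a field:
    (∀ (K A S : Type) [Field K] [NonUnitalRing A] [Module K A] [SMulCommClass K A A]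
        [IsScalarTower K A A] [FiniteDimensional K A] [Ring S]
      (I : AddSubgroup S),
      (∀ x ∈ I, ∀ s : S, s * x ∈ I ∧ x * s ∈ I) →  -- `I` is a two-sided ideal
      Finite (S ⧸ I) →                               -- of finite additive index
      ∀ e : S → A, Set.InjOn e (I : Set S) →         -- isomorphic, as a nonunital
        (∀ a : A, ∃ x ∈ I, e x = a) →                -- ring, to `A`
        (∀ x ∈ I, ∀ y ∈ I, e (x + y) = e x + e y) →
        (∀ x ∈ I, ∀ y ∈ I, e (x * y) = e x * e y) →
      ¬ ∃ φ : FreeRing Bool →+* S, Function.Injective φ) := by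
  constructor
  · intro K B _ _ _ _
    rintro ⟨φ, hφ⟩
    set n := Module.finrank K B with hn
    have h1 : φ (stdF n (fun i : Fin (n+1) => wFR (i:ℕ))) = 0 := by
      rw [stdF_ringHom]
      exact stdF_eq_zero (K := K) le_rfl _
    have h2 := hφ (h1.trans (map_zero φ).symm)
    apply smul_stdF_wFR_ne_zero n (c := 1) one_ne_zero
    rw [one_smul]
    exact h2
  · intro K A S _ _ _ _ _ _ _ I hI hfin e hinj hsurj hadd hmul
    rintro ⟨φ, hφ⟩
    set n := Module.finrank K A with hn
    set m := Nat.card (S ⧸ I) with hm_def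
    have hm : (m : ℤ) ≠ 0 := by
      have : 0 < m := Nat.card_pos
      exact_mod_cast this.ne'
    have hmem : ∀ s : S, (m : ℤ) • s ∈ I := by
      intro s
      rw [natCast_zsmul]
      rw [← QuotientAddGroup.eq_zero_iff]
      have : ((m • s : S) : S ⧸ I) = m • ((s : S) : S ⧸ I) := by
        exact map_nsmul (QuotientAddGroup.mk' I) m s
      rw [this, hm_def]
      exact card_nsmul_eq_zero'
    set v : Fin (n+1) → S := fun i => (m : ℤ) • φ (wFR (i : ℕ)) with hv_def
    have hv : ∀ i, v i ∈ I := fun i => hmem _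
    have he0 : e 0 = 0 := by
      have h := hadd 0 I.zero_mem 0 I.zero_mem
      rw [add_zero] at h
      have h2 : e 0 + e 0 = e 0 + 0 := by rw [add_zero]; exact h.symm
      exact add_left_cancel h2
    obtain ⟨hmemS, heq⟩ := stdF_mem_map I hI e hadd hmul n v hv
    have hzero : stdF n (fun i => e (v i)) = 0 := stdF_eq_zero (K := K) le_rfl _
    have hS0 : stdF n v = 0 := by
      apply hinj hmemS I.zero_mem
      rw [heq, hzero, he0]
    have hφz : φ (stdF n (fun i : Fin (n+1) => (m : ℤ) • wFR (i:ℕ))) = 0 := by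
      rw [stdF_ringHom]
      have : (fun i : Fin (n+1) => φ ((m : ℤ) • wFR (i:ℕ))) = v := by
        funext i
        rw [map_zsmul]
      rw [this, hS0]
    have h2 := hφ (hφz.trans (map_zero φ).symm)
    rw [stdF_zsmul] at h2
    exact smul_stdF_wFR_ne_zero n (pow_ne_zero _ hm) h2
end
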